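/- (Time-weighted energy absorption) Suppose F : [0,T] → [0,∞) is differentiable, A, B ≥ 0, ϑ > 0, and F satisfies F'(t) ≤ A(t)√F(t) + B(t) F(t) on [0,T], where ∫₀^t A(r)²(1+r)^{−ϑ} dr ≤ M and B(t) ≤ δ(1+t)^{−1} with δ sufficiently small depending on ϑ. Then sup_{0≤t≤T} F(t)(1+t)^{−1−ϑ} + ∫₀^T F(r)(1+r)^{−2−ϑ} dr ≲ F(0) + M. -/
import Mathlib


open MeasureTheory Set

/-- Time-weighted energy absorption: if `F' ≤ A √F + B F` on `[0,T]` with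
`∫₀^t A(r)² (1+r)^{-ϑ} dr ≤ M` and `B(t) ≤ δ (1+t)^{-1}` for `δ` sufficiently small
(depending on `ϑ`), then
`sup_t F(t)(1+t)^{-1-ϑ} + ∫₀^T F(r)(1+r)^{-2-ϑ} dr ≲ F(0) + M`. -/
theorem time_weighted_absorption (ϑ : ℝ) (hϑ : 0 < ϑ) :
    ∃ δ > 0, ∃ C > 0, ∀ (T M : ℝ), 0 ≤ T → 0 ≤ M →
      ∀ F A B : ℝ → ℝ,
      (∀ t ∈ Set.Icc (0 : ℝ) T, DifferentiableAt ℝ F t) →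
      (∀ t ∈ Set.Icc (0 : ℝ) T, 0 ≤ F t) →
      (∀ t ∈ Set.Icc (0 : ℝ) T, 0 ≤ A t) →
      (∀ t ∈ Set.Icc (0 : ℝ) T, 0 ≤ B t) →
      (∀ t ∈ Set.Icc (0 : ℝ) T, deriv F t ≤ A t * Real.sqrt (F t) + B t * F t) →
      IntervalIntegrable (fun r => A r ^ 2 * (1 + r) ^ (-ϑ)) volume 0 T →
      (∀ t ∈ Set.Icc (0 : ℝ) T, (∫ r in (0 : ℝ)..t, A r ^ 2 * (1 + r) ^ (-ϑ)) ≤ M) →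
      (∀ t ∈ Set.Icc (0 : ℝ) T, B t ≤ δ * (1 + t)⁻¹) →
      (∀ t ∈ Set.Icc (0 : ℝ) T, F t * (1 + t) ^ (-(1 + ϑ)) ≤ C * (F 0 + M)) ∧
        (∫ r in (0 : ℝ)..T, F r * (1 + r) ^ (-(2 + ϑ))) ≤ C * (F 0 + M) := by
  refine ⟨ϑ/2, by linarith, 2, by norm_num, ?_⟩
  intro T M hT hM F A B hFdiff hFnn hAnn hBnn hFder hAint hAM hB
  -- weights
  set G : ℝ → ℝ := fun t => F t * (1 + t) ^ (-(1+ϑ)) with hG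
  set φ : ℝ → ℝ := fun t => (1/2) * (A t ^ 2 * (1+t) ^ (-ϑ)) - (1/2) * (F t * (1+t) ^ (-(2+ϑ))) with hφ
  have hp : ∀ t : ℝ, 0 ≤ t → (0:ℝ) < 1 + t := fun t ht => by linarith
  -- G has derivative
  have hGder : ∀ t ∈ Icc (0:ℝ) T, HasDerivAt G
      (deriv F t * (1+t) ^ (-(1+ϑ)) + F t * ((-(1+ϑ)) * (1+t) ^ (-(1+ϑ)-1) * 1)) t := by
    intro t ht
    have h1 : HasDerivAt (fun x : ℝ => 1 + x) 1 t := by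
      simpa using (hasDerivAt_id t).const_add (1:ℝ)
    have hw : HasDerivAt (fun x : ℝ => (1+x) ^ (-(1+ϑ)))
        ((-(1+ϑ)) * (1+t) ^ (-(1+ϑ)-1) * 1) t := by
      have := h1.rpow_const (p := -(1+ϑ)) (Or.inl (ne_of_gt (hp t ht.1)))
      convert this using 1; ring
    exact ((hFdiff t ht).hasDerivAt).mul hw
  -- derivative bound
  have hkey : ∀ t ∈ Icc (0:ℝ) T,
      deriv F t * (1+t) ^ (-(1+ϑ)) + F t * ((-(1+ϑ)) * (1+t) ^ (-(1+ϑ)-1) * 1) ≤ φ t := by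
    intro t ht
    have hpt : (0:ℝ) < 1 + t := hp t ht.1
    set u : ℝ := (1+t) ^ (-(ϑ/2)) with hu
    set v : ℝ := (1+t) ^ (-((2+ϑ)/2)) with hv
    set s : ℝ := Real.sqrt (F t) with hs
    have hunn : 0 ≤ u := Real.rpow_nonneg hpt.le _
    have hvnn : 0 ≤ v := Real.rpow_nonneg hpt.le _
    have hsnn : 0 ≤ s := Real.sqrt_nonneg _
    have hs2 : s ^ 2 = F t := Real.sq_sqrt (hFnn t ht)
    have e1 : (1+t) ^ (-(1+ϑ)) = u * v := by
      rw [hu, hv, ← Real.rpow_add hpt]; ring_nf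
    have e2 : (1+t) ^ (-ϑ) = u ^ 2 := by
      rw [hu, ← Real.rpow_natCast ((1+t) ^ (-(ϑ/2))) 2, ← Real.rpow_mul hpt.le]; norm_num
    have e3 : (1+t) ^ (-(2+ϑ)) = v ^ 2 := by
      rw [hv, ← Real.rpow_natCast ((1+t) ^ (-((2+ϑ)/2))) 2, ← Real.rpow_mul hpt.le]; norm_num
    have e4 : (1+t)⁻¹ * (u * v) = v ^ 2 := by
      rw [hu, hv, ← Real.rpow_neg_one (1+t), ← Real.rpow_add hpt, ← Real.rpow_add hpt,
        ← Real.rpow_natCast ((1+t) ^ (-((2+ϑ)/2))) 2, ← Real.rpow_mul hpt.le]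
      ring_nf
    have e5 : (-(1+ϑ)-1 : ℝ) = -(2+ϑ) := by ring
    have hFd := hFder t ht
    have hBt := hB t ht
    have hsF : Real.sqrt (F t) = s := rfl
    rw [hφ]
    simp only [e5, e1, e2, e3, ← hs2]
    -- goal in u, v, s
    have h1 : deriv F t * (u*v) ≤ (A t * s + B t * s^2) * (u*v) := by
      apply mul_le_mul_of_nonneg_right _ (mul_nonneg hunn hvnn)
      calc deriv F t ≤ A t * Real.sqrt (F t) + B t * F t := hFd
        _ = A t * s + B t * s^2 := by rw [hs2]
    have h2 : (0:ℝ) ≤ (A t * u - s * v)^2 := sq_nonneg _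
    have h3 : B t * s^2 * (u*v) ≤ (ϑ/2) * (s^2 * v^2) := by
      have := mul_le_mul_of_nonneg_right hBt
        (mul_nonneg (sq_nonneg s) (mul_nonneg hunn hvnn))
      calc B t * s^2 * (u*v) = B t * (s^2 * (u*v)) := by ring
        _ ≤ ϑ/2 * (1+t)⁻¹ * (s^2 * (u*v)) := this
        _ = ϑ/2 * (s^2 * ((1+t)⁻¹ * (u*v))) := by ring
        _ = ϑ/2 * (s^2 * v^2) := by rw [e4]
    have h4 : (0:ℝ) ≤ ϑ * (s*v)^2 := mul_nonneg hϑ.le (sq_nonneg _)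
    nlinarith [h1, h2, h3, h4, sq_nonneg (s*v), mul_nonneg (hAnn t ht) hsnn]
  -- continuity / integrability
  have hFcont : ContinuousOn F (Icc 0 T) := fun t ht =>
    ((hFdiff t ht).continuousAt).continuousWithinAt
  have hwcont : ContinuousOn (fun r : ℝ => (1+r) ^ (-(2+ϑ))) (Icc 0 T) := by
    apply ContinuousOn.rpow_const (by fun_prop)
    intro t ht; exact Or.inl (ne_of_gt (hp t ht.1))
  have hFint : IntervalIntegrable (fun r => F r * (1+r) ^ (-(2+ϑ))) volume 0 T :=
    (hFcont.mul hwcont).intervalIntegrable_of_Icc hT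
  have hφint : IntegrableOn φ (Icc 0 T) volume := by
    have hA : IntegrableOn (fun r => A r ^ 2 * (1+r) ^ (-ϑ)) (Icc 0 T) volume := by
      rw [integrableOn_Icc_iff_integrableOn_Ioc]
      simpa [intervalIntegrable_iff_integrableOn_Ioc_of_le hT] using hAint
    have hF2 : IntegrableOn (fun r => F r * (1+r) ^ (-(2+ϑ))) (Icc 0 T) volume := by
      rw [integrableOn_Icc_iff_integrableOn_Ioc]
      simpa [intervalIntegrable_iff_integrableOn_Ioc_of_le hT] using hFint
    exact (hA.const_mul (1/2)).sub (hF2.const_mul (1/2))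
  -- main integral inequality on [0,t]
  have main : ∀ t ∈ Icc (0:ℝ) T, G t - G 0 ≤ ∫ y in (0:ℝ)..t, φ y := by
    intro t ht
    apply intervalIntegral.sub_le_integral_of_hasDeriv_right_of_le ht.1
      (fun x hx => (hGder x ⟨hx.1, hx.2.trans ht.2⟩).continuousAt.continuousWithinAt)
      (fun x hx => (hGder x ⟨hx.1.le, hx.2.le.trans ht.2⟩).hasDerivWithinAt)
      (hφint.mono_set (Icc_subset_Icc le_rfl ht.2))
      (fun x hx => hkey x ⟨hx.1.le, hx.2.le.trans ht.2⟩)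
  have hG0 : G 0 = F 0 := by simp [hG]
  have hsplit : ∀ t ∈ Icc (0:ℝ) T, (∫ y in (0:ℝ)..t, φ y)
      = (1/2) * (∫ r in (0:ℝ)..t, A r ^ 2 * (1+r) ^ (-ϑ))
        - (1/2) * (∫ r in (0:ℝ)..t, F r * (1+r) ^ (-(2+ϑ))) := by
    intro t ht
    have hsub : Set.uIcc (0:ℝ) t ⊆ Set.uIcc (0:ℝ) T :=
      uIcc_subset_uIcc left_mem_uIcc (by rw [uIcc_of_le hT]; exact ht)
    have hA' := hAint.mono_set hsub
    have hF' := hFint.mono_set hsub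
    rw [hφ]
    rw [intervalIntegral.integral_sub (hA'.const_mul _) (hF'.const_mul _),
      intervalIntegral.integral_const_mul, intervalIntegral.integral_const_mul]
  have hFInn : ∀ t ∈ Icc (0:ℝ) T, 0 ≤ ∫ r in (0:ℝ)..t, F r * (1+r) ^ (-(2+ϑ)) := by
    intro t ht
    apply intervalIntegral.integral_nonneg ht.1
    intro x hx
    exact mul_nonneg (hFnn x ⟨hx.1, hx.2.trans ht.2⟩) (Real.rpow_nonneg (hp x hx.1).le _)
  have hF0M : 0 ≤ F 0 + M := add_nonneg (hFnn 0 ⟨le_rfl, hT⟩) hM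
  constructor
  · intro t ht
    have h1 := main t ht
    rw [hsplit t ht, hG0] at h1
    have h2 := hAM t ht
    have h3 := hFInn t ht
    have : F t * (1+t) ^ (-(1+ϑ)) = G t := rfl
    rw [this]; linarith
  · have hT' : T ∈ Icc (0:ℝ) T := ⟨hT, le_rfl⟩
    have h1 := main T hT'
    rw [hsplit T hT', hG0] at h1
    have h2 := hAM T hT'
    have hGT : 0 ≤ G T := mul_nonneg (hFnn T hT') (Real.rpow_nonneg (hp T hT).le _)
    linarith
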